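/- Let d, d̄ ∈ S be linearly independent, set u = (d × d̄)/|d × d̄|, and let P : [−1,1] → ℝ be continuously differentiable. Define Q(x) = P(x·u)(x·d̄) and Q̄(x) = P(x·u)(x·d) for x ∈ S. Then V[Q,d](x₀) = V[Q̄,d̄](x₀) for every x₀ ∈ ℝ³ with |x₀| ≠ 1. In particular, two distinct dipole directions d ≠ ±d̄ can generate the same magnetic potential outside the sphere. -/

import Mathlib

open MeasureTheory
open scoped RealInnerProductSpace NNReal ENNReal

noncomputable section

abbrev E3 := EuclideanSpace ℝ (Fin 3)

/-- The unit sphere `S = {x ∈ ℝ³ : |x| = 1}`. -/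
def sphS : Set E3 := Metric.sphere 0 1

/-- The magnetic potential generated by a magnetization `m` on the unit sphere. -/
def V (m : E3 → E3) (x : E3) : ℝ :=
  (4 * Real.pi)⁻¹ * ∫ y in sphS, ⟪m y, (‖x - y‖ ^ 3)⁻¹ • (x - y)⟫ ∂μH[2]

/-- Dipole-induced magnetization with susceptibility `Q` and dipole direction `d`. -/
def mQd (Q : E3 → ℝ) (d : E3) (x : E3) : E3 := Q x • ((3 * ⟪x, d⟫) • x - d)

/-- Cross product on `ℝ³`. -/
def cross3 (a b : E3) : E3 :=
  (EuclideanSpace.equiv (Fin 3) ℝ).symm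
    ![a 1 * b 2 - a 2 * b 1, a 2 * b 0 - a 0 * b 2, a 0 * b 1 - a 1 * b 0]

lemma inner3 (x y : E3) : ⟪x, y⟫ = x 0 * y 0 + x 1 * y 1 + x 2 * y 2 := by
  simp [PiLp.inner_apply, Fin.sum_univ_three, RCLike.inner_apply, mul_comm]
@[simp] lemma cross3_0 (a b : E3) : cross3 a b 0 = a 1 * b 2 - a 2 * b 1 := rfl
@[simp] lemma cross3_1 (a b : E3) : cross3 a b 1 = a 2 * b 0 - a 0 * b 2 := rfl
@[simp] lemma cross3_2 (a b : E3) : cross3 a b 2 = a 0 * b 1 - a 1 * b 0 := rfl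
lemma E3ext {x y : E3} (h0 : x 0 = y 0) (h1 : x 1 = y 1) (h2 : x 2 = y 2) : x = y := by
  ext i; fin_cases i <;> assumption
@[simp] lemma smul3 (r : ℝ) (x : E3) (i : Fin 3) : (r • x) i = r * x i := rfl
@[simp] lemma add3 (x y : E3) (i : Fin 3) : (x + y) i = x i + y i := rfl
@[simp] lemma sub3 (x y : E3) (i : Fin 3) : (x - y) i = x i - y i := rfl
lemma cross3_smul_right (r : ℝ) (a b : E3) : cross3 a (r • b) = r • cross3 a b := by
  apply E3ext <;> simp <;> ring
lemma cross3_anti (a b : E3) : cross3 a b = - cross3 b a := by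
  apply E3ext <;> simp [PiLp.neg_apply] <;> ring
lemma cross3_sub_right (a x y : E3) : cross3 a (x - y) = cross3 a x - cross3 a y := by
  apply E3ext <;> simp <;> ring
lemma triple (y d e : E3) : cross3 y (cross3 d e) = ⟪y, e⟫ • d - ⟪y, d⟫ • e := by
  simp only [inner3]; apply E3ext <;> simp <;> ring
lemma inner_cross_left (u y : E3) : ⟪cross3 u y, u⟫ = 0 := by simp only [inner3]; simp; ring
lemma inner_cross_right (u y : E3) : ⟪cross3 u y, y⟫ = 0 := by simp only [inner3]; simp; ring
lemma inner_cross_cross (u x y : E3) :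
    ⟪cross3 u x, cross3 u y⟫ = ⟪u, u⟫ * ⟪x, y⟫ - ⟪u, x⟫ * ⟪u, y⟫ := by
  simp only [inner3]; simp; ring
lemma crosscross (u y : E3) (hu1 : ⟪u, u⟫ = 1) :
    cross3 u (cross3 u y) = ⟪u, y⟫ • u - y := by
  rw [inner3] at hu1
  simp only [inner3]
  apply E3ext <;> simp
  · linear_combination (-(y 0)) * hu1
  · linear_combination (-(y 1)) * hu1
  · linear_combination (-(y 2)) * hu1

/-- Rotation by angle `t` about axis `u` (Rodrigues). -/
def Rot (u : E3) (t : ℝ) (y : E3) : E3 :=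
  y + Real.sin t • cross3 u y + (1 - Real.cos t) • cross3 u (cross3 u y)

lemma rot_zero (u y : E3) : Rot u 0 y = y := by simp [Rot]


lemma inner_cross_left' (u y : E3) : ⟪u, cross3 u y⟫ = 0 := by
  rw [real_inner_comm]; exact inner_cross_left u y
lemma inner_cross_right' (u y : E3) : ⟪y, cross3 u y⟫ = 0 := by
  rw [real_inner_comm]; exact inner_cross_right u y

lemma rot_inner_u {u : E3} (hu1 : ⟪u, u⟫ = 1) (t : ℝ) (y : E3) :
    ⟪Rot u t y, u⟫ = ⟪y, u⟫ := by
  rw [Rot, crosscross u y hu1]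
  simp only [inner_add_left, inner_sub_left, real_inner_smul_left, inner_cross_left, hu1,
    real_inner_comm y u]
  ring

lemma rot_norm_sq {u : E3} (hu1 : ⟪u, u⟫ = 1) (t : ℝ) (y : E3) :
    ⟪Rot u t y, Rot u t y⟫ = ⟪y, y⟫ := by
  rw [Rot, crosscross u y hu1]
  simp only [inner_add_left, inner_add_right, inner_sub_left, inner_sub_right,
    real_inner_smul_left, real_inner_smul_right, inner_cross_left, inner_cross_right,
    inner_cross_left', inner_cross_right', inner_cross_cross, hu1]
  rw [real_inner_comm u y]
  linear_combination (⟪y,y⟫ - ⟪u,y⟫^2) * (Real.sin_sq_add_cos_sq t)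

lemma rot_sub {u : E3} (t : ℝ) (x y : E3) : Rot u t x - Rot u t y = Rot u t (x - y) := by
  simp only [Rot, cross3_sub_right, smul_sub]
  abel

lemma cross3_add_right (a x y : E3) : cross3 a (x + y) = cross3 a x + cross3 a y := by
  apply E3ext <;> simp <;> ring
lemma cross3_self (a : E3) : cross3 a a = 0 := by
  apply E3ext <;> simp [PiLp.zero_apply] <;> ring

lemma rot_rot {u : E3} (hu1 : ⟪u, u⟫ = 1) (s t : ℝ) (y : E3) :
    Rot u s (Rot u t y) = Rot u (s + t) y := by
  have hb := crosscross u y hu1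
  have key : cross3 u (Rot u t y) =
      Real.cos t • cross3 u y + Real.sin t • (⟪u, y⟫ • u - y) := by
    rw [Rot, hb]
    rw [cross3_add_right, cross3_add_right, cross3_smul_right, cross3_smul_right, hb,
      cross3_sub_right, cross3_smul_right, cross3_self]
    module
  have hp : ⟪u, Rot u t y⟫ = ⟪u, y⟫ := by
    rw [real_inner_comm (Rot u t y) u, real_inner_comm y u]; exact rot_inner_u hu1 t y
  have h2 : cross3 u (cross3 u (Rot u t y)) = ⟪u, y⟫ • u - Rot u t y := by
    rw [crosscross _ _ hu1, hp]
  rw [show Rot u s (Rot u t y) = Rot u t y + Real.sin s • cross3 u (Rot u t y)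
      + (1 - Real.cos s) • cross3 u (cross3 u (Rot u t y)) from rfl, h2, key]
  rw [show Rot u t y = y + Real.sin t • cross3 u y
      + (1 - Real.cos t) • cross3 u (cross3 u y) from rfl]
  rw [show Rot u (s + t) y = y + Real.sin (s + t) • cross3 u y
      + (1 - Real.cos (s + t)) • cross3 u (cross3 u y) from rfl]
  rw [hb, Real.sin_add, Real.cos_add]
  module


lemma rot_norm' {u : E3} (hu1 : ⟪u, u⟫ = 1) (t : ℝ) (y : E3) : ‖Rot u t y‖ = ‖y‖ := by
  have h := rot_norm_sq hu1 t y
  rw [real_inner_self_eq_norm_sq, real_inner_self_eq_norm_sq] at h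
  nlinarith [norm_nonneg (Rot u t y), norm_nonneg y]

def rotEquiv (u : E3) (hu1 : ⟪u, u⟫ = 1) (t : ℝ) : E3 ≃ᵢ E3 where
  toFun := Rot u t
  invFun := Rot u (-t)
  left_inv y := by rw [rot_rot hu1]; simp [rot_zero]
  right_inv y := by rw [rot_rot hu1]; simp [rot_zero]
  isometry_toFun := Isometry.of_dist_eq fun x y => by
    rw [dist_eq_norm, dist_eq_norm, rot_sub, rot_norm' hu1]

lemma rot_preimage_sph {u : E3} (hu1 : ⟪u, u⟫ = 1) (t : ℝ) :
    Rot u t ⁻¹' sphS = sphS := by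
  ext y
  simp [sphS, mem_sphere_zero_iff_norm, rot_norm' hu1]

lemma rot_setIntegral {u : E3} (hu1 : ⟪u, u⟫ = 1) (t : ℝ) (g : E3 → ℝ) :
    ∫ y in sphS, g (Rot u t y) ∂μH[2] = ∫ y in sphS, g y ∂μH[2] := by
  have h1 := ((rotEquiv u hu1 t).measurePreserving_hausdorffMeasure
    2).setIntegral_preimage_emb (rotEquiv u hu1 t).toHomeomorph.measurableEmbedding g sphS
  rw [show (rotEquiv u hu1 t) ⁻¹' sphS = sphS from rot_preimage_sph hu1 t] at h1
  exact h1

lemma cos_lip' (a b : ℝ) : |Real.cos a - Real.cos b| ≤ |a - b| := by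
  rw [Real.cos_sub_cos]
  have h1 := Real.abs_sin_le_one ((a + b) / 2)
  have h2 := Real.abs_sin_le_abs (x := (a - b) / 2)
  rw [abs_mul, abs_mul]
  have : |(a - b) / 2| = |a - b| / 2 := by rw [abs_div]; norm_num
  rw [this] at h2
  have hn : |(-2 : ℝ)| = 2 := by norm_num
  rw [hn]
  nlinarith [abs_nonneg (Real.sin ((a+b)/2)), abs_nonneg (a - b)]

lemma sin_lip' (a b : ℝ) : |Real.sin a - Real.sin b| ≤ |a - b| := by
  rw [Real.sin_sub_sin]
  have h1 := Real.abs_cos_le_one ((a + b) / 2)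
  have h2 := Real.abs_sin_le_abs (x := (a - b) / 2)
  rw [abs_mul, abs_mul]
  have : |(a - b) / 2| = |a - b| / 2 := by rw [abs_div]; norm_num
  rw [this] at h2
  have hn : |(2 : ℝ)| = 2 := by norm_num
  rw [hn]
  nlinarith [abs_nonneg (Real.sin ((a-b)/2)), abs_nonneg (a - b)]

def sphPar : (Fin 2 → ℝ) → E3 := fun p =>
  (EuclideanSpace.equiv (Fin 3) ℝ).symm
    ![Real.cos (p 0) * Real.cos (p 1), Real.cos (p 0) * Real.sin (p 1), Real.sin (p 0)]

lemma sphPar_lip : LipschitzWith 4 sphPar := by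
  apply LipschitzWith.of_dist_le_mul
  intro p q
  have hd : (0:ℝ) ≤ dist p q := dist_nonneg
  have h0 : |p 0 - q 0| ≤ dist p q := by
    have := dist_le_pi_dist p q 0; rwa [Real.dist_eq] at this
  have h1 : |p 1 - q 1| ≤ dist p q := by
    have := dist_le_pi_dist p q 1; rwa [Real.dist_eq] at this
  have key : ∀ i : Fin 3, |sphPar p i - sphPar q i| ≤ 2 * dist p q := by
    intro i
    fin_cases i
    · show |Real.cos (p 0) * Real.cos (p 1) - Real.cos (q 0) * Real.cos (q 1)| ≤ _
      have e : Real.cos (p 0) * Real.cos (p 1) - Real.cos (q 0) * Real.cos (q 1)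
          = (Real.cos (p 0) - Real.cos (q 0)) * Real.cos (p 1)
            + Real.cos (q 0) * (Real.cos (p 1) - Real.cos (q 1)) := by ring
      rw [e]
      calc |_| ≤ |(Real.cos (p 0) - Real.cos (q 0)) * Real.cos (p 1)|
            + |Real.cos (q 0) * (Real.cos (p 1) - Real.cos (q 1))| := abs_add_le _ _
        _ ≤ _ := by
            rw [abs_mul, abs_mul]
            have a1 := cos_lip' (p 0) (q 0)
            have a2 := cos_lip' (p 1) (q 1)
            have b1 := Real.abs_cos_le_one (p 1)
            have b2 := Real.abs_cos_le_one (q 0)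
            nlinarith [abs_nonneg (Real.cos (p 0) - Real.cos (q 0)),
              abs_nonneg (Real.cos (p 1) - Real.cos (q 1)),
              abs_nonneg (Real.cos (q 0)), abs_nonneg (Real.cos (p 1))]
    · show |Real.cos (p 0) * Real.sin (p 1) - Real.cos (q 0) * Real.sin (q 1)| ≤ _
      have e : Real.cos (p 0) * Real.sin (p 1) - Real.cos (q 0) * Real.sin (q 1)
          = (Real.cos (p 0) - Real.cos (q 0)) * Real.sin (p 1)
            + Real.cos (q 0) * (Real.sin (p 1) - Real.sin (q 1)) := by ring
      rw [e]
      calc |_| ≤ |(Real.cos (p 0) - Real.cos (q 0)) * Real.sin (p 1)|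
            + |Real.cos (q 0) * (Real.sin (p 1) - Real.sin (q 1))| := abs_add_le _ _
        _ ≤ _ := by
            rw [abs_mul, abs_mul]
            have a1 := cos_lip' (p 0) (q 0)
            have a2 := sin_lip' (p 1) (q 1)
            have b1 := Real.abs_sin_le_one (p 1)
            have b2 := Real.abs_cos_le_one (q 0)
            nlinarith [abs_nonneg (Real.cos (p 0) - Real.cos (q 0)),
              abs_nonneg (Real.sin (p 1) - Real.sin (q 1)),
              abs_nonneg (Real.cos (q 0)), abs_nonneg (Real.sin (p 1))]
    · show |Real.sin (p 0) - Real.sin (q 0)| ≤ _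
      have := sin_lip' (p 0) (q 0)
      nlinarith
  rw [EuclideanSpace.dist_eq]
  have hsum : ∑ i : Fin 3, dist (sphPar p i) (sphPar q i) ^ 2 ≤ (4 * dist p q) ^ 2 := by
    rw [Fin.sum_univ_three, Real.dist_eq, Real.dist_eq, Real.dist_eq]
    have k0 := key 0; have k1 := key 1; have k2 := key 2
    nlinarith [abs_nonneg (sphPar p 0 - sphPar q 0), abs_nonneg (sphPar p 1 - sphPar q 1),
      abs_nonneg (sphPar p 2 - sphPar q 2), sq_abs (sphPar p 0 - sphPar q 0),
      sq_abs (sphPar p 1 - sphPar q 1), sq_abs (sphPar p 2 - sphPar q 2)]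
  calc Real.sqrt (∑ i : Fin 3, dist (sphPar p i) (sphPar q i) ^ 2)
      ≤ Real.sqrt ((4 * dist p q) ^ 2) := Real.sqrt_le_sqrt hsum
    _ = 4 * dist p q := Real.sqrt_sq (by positivity)
    _ = ((4 : ℝ≥0) : ℝ) * dist p q := by norm_num

lemma sph_subset_image : sphS ⊆ sphPar '' (Metric.closedBall (0 : Fin 2 → ℝ) 4) := by
  intro y hy
  have hy1 : y 0 ^ 2 + y 1 ^ 2 + y 2 ^ 2 = 1 := by
    have h : ‖y‖ = 1 := by simpa [sphS] using mem_sphere_zero_iff_norm.mp hy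
    have h2 : ‖y‖ ^ 2 = 1 := by rw [h]; norm_num
    rw [EuclideanSpace.norm_eq, Real.sq_sqrt (by positivity)] at h2
    rw [Fin.sum_univ_three] at h2
    simp only [Real.norm_eq_abs, sq_abs] at h2
    linarith
  set z := y 2 with hzdef
  have hz : -1 ≤ z ∧ z ≤ 1 := by constructor <;> nlinarith
  set θ := Real.arcsin z with hθdef
  have hθ1 : Real.sin θ = z := Real.sin_arcsin hz.1 hz.2
  have hθb : |θ| ≤ 4 := by
    have h1 := Real.arcsin_le_pi_div_two z
    have h2 := Real.neg_pi_div_two_le_arcsin z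
    have := Real.pi_le_four
    rw [abs_le]; constructor <;> [linarith; linarith]
  have hcos : Real.cos θ = Real.sqrt (1 - z ^ 2) := by
    rw [hθdef, Real.cos_arcsin]
  have hc2 : Real.cos θ ^ 2 = y 0 ^ 2 + y 1 ^ 2 := by
    rw [hcos, Real.sq_sqrt (by nlinarith)]; linarith
  by_cases hc : Real.cos θ = 0
  · have h0 : y 0 = 0 := by nlinarith
    have h1 : y 1 = 0 := by nlinarith
    refine ⟨![θ, 0], ?_, ?_⟩
    · rw [Metric.mem_closedBall]
      rw [dist_pi_le_iff (by norm_num : (0:ℝ) ≤ 4)]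
      intro i; fin_cases i
      · simpa [Real.dist_eq] using hθb
      · simp [Real.dist_eq]
    · ext i; fin_cases i <;>
        simp [sphPar, hc, h0, h1, hθ1, hzdef]
  · have hcpos : 0 < Real.cos θ := by
      rw [hcos] at hc ⊢
      have := Real.sqrt_nonneg (1 - z ^ 2)
      cases' this.lt_or_eq with h h
      · exact h
      · exact absurd h.symm hc
    set w : ℂ := Complex.mk (y 0) (y 1) with hwdef
    have habs : ‖w‖ = Real.cos θ := by
      have he : y 0 * y 0 + y 1 * y 1 = Real.cos θ ^ 2 := by rw [hc2]; ring
      rw [Complex.norm_def, Complex.normSq_mk, he, Real.sqrt_sq hcpos.le]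
    have hw0 : w ≠ 0 := by
      intro h0
      rw [h0] at habs; simp at habs; exact hc habs.symm
    have hcosarg : Real.cos w.arg = y 0 / Real.cos θ := by
      rw [Complex.cos_arg hw0, habs]
    have hsinarg : Real.sin w.arg = y 1 / Real.cos θ := by
      rw [Complex.sin_arg, habs]
    refine ⟨![θ, w.arg], ?_, ?_⟩
    · rw [Metric.mem_closedBall]
      rw [dist_pi_le_iff (by norm_num : (0:ℝ) ≤ 4)]
      intro i; fin_cases i
      · simpa [Real.dist_eq] using hθb
      · have h1 := Complex.abs_arg_le_pi w
        have h2 := Real.pi_le_four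
        simp [Real.dist_eq]
        linarith [abs_le.mp h1]
    · ext i; fin_cases i <;>
        simp [sphPar, hcosarg, hsinarg, hθ1, hzdef] <;> field_simp

lemma sph_measure_lt_top : μH[2] sphS < ⊤ := by
  have h1 : μH[2] sphS ≤ μH[2] (sphPar '' Metric.closedBall (0 : Fin 2 → ℝ) 4) :=
    measure_mono sph_subset_image
  have h2 := sphPar_lip.hausdorffMeasure_image_le (by norm_num : (0:ℝ) ≤ 2)
    (Metric.closedBall (0 : Fin 2 → ℝ) 4)
  have h3 : (μH[2] : Measure (Fin 2 → ℝ)) = volume := by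
    simpa using (hausdorffMeasure_pi_real (ι := Fin 2))
  have h4 : (μH[2] : Measure (Fin 2 → ℝ)) (Metric.closedBall 0 4) < ⊤ := by
    rw [h3]
    exact (isCompact_closedBall 0 4).measure_lt_top
  calc μH[2] sphS ≤ _ := h1
    _ ≤ _ := h2
    _ < ⊤ := by
      apply ENNReal.mul_lt_top _ h4
      have : ((4:ℝ≥0) : ℝ≥0∞) ^ (2:ℝ) ≠ ⊤ := by
        apply ENNReal.rpow_ne_top_of_nonneg (by norm_num)
        simp
      exact lt_top_iff_ne_top.mpr this

instance sph_finite : IsFiniteMeasure ((μH[2] : Measure E3).restrict sphS) :=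
  ⟨by rw [Measure.restrict_apply_univ]; exact sph_measure_lt_top⟩

lemma sphS_measurable : MeasurableSet sphS := (Metric.isClosed_sphere).measurableSet

lemma integrable_sph {f : E3 → ℝ} (hf : ContinuousOn f sphS) :
    Integrable f ((μH[2] : Measure E3).restrict sphS) := by
  obtain ⟨C, hC⟩ := (isCompact_sphere (0 : E3) 1).exists_bound_of_continuousOn hf
  refine (integrable_const C).mono' (hf.aestronglyMeasurable sphS_measurable) ?_
  refine (ae_restrict_mem sphS_measurable).mono fun y hy => ?_
  exact hC y hy

lemma cross3_cont (a : E3) : Continuous (cross3 a) := by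
  apply Continuous.comp (EuclideanSpace.equiv (Fin 3) ℝ).symm.continuous
  apply continuous_pi
  intro i
  have h0 : Continuous fun y : E3 => y 0 :=
    (continuous_apply (0 : Fin 3)).comp (EuclideanSpace.equiv (Fin 3) ℝ).continuous
  have h1 : Continuous fun y : E3 => y 1 :=
    (continuous_apply (1 : Fin 3)).comp (EuclideanSpace.equiv (Fin 3) ℝ).continuous
  have h2 : Continuous fun y : E3 => y 2 :=
    (continuous_apply (2 : Fin 3)).comp (EuclideanSpace.equiv (Fin 3) ℝ).continuous
  fin_cases i <;> simp [Matrix.vecHead, Matrix.vecTail] <;> fun_prop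

lemma rotEquiv_apply {u : E3} (hu1 : ⟪u, u⟫ = 1) (t : ℝ) (y : E3) :
    rotEquiv u hu1 t y = Rot u t y := rfl

lemma norm_cross_le {u : E3} (hu1 : ⟪u, u⟫ = 1) (y : E3) (hy : ‖y‖ = 1) :
    ‖cross3 u y‖ ≤ 1 := by
  have h := inner_cross_cross u y y
  rw [real_inner_self_eq_norm_sq, hu1, real_inner_self_eq_norm_sq, hy] at h
  have h2 : ‖cross3 u y‖ ^ 2 ≤ 1 := by rw [h]; nlinarith [sq_nonneg ⟪u, y⟫]
  nlinarith [norm_nonneg (cross3 u y)]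

lemma norm_crosscross_le {u : E3} (hu1 : ⟪u, u⟫ = 1) (y : E3) (hy : ‖y‖ = 1) :
    ‖cross3 u (cross3 u y)‖ ≤ 1 := by
  have h := inner_cross_cross u (cross3 u y) (cross3 u y)
  rw [real_inner_self_eq_norm_sq, hu1, real_inner_self_eq_norm_sq, inner_cross_left'] at h
  have h2 : ‖cross3 u (cross3 u y)‖ ^ 2 ≤ 1 := by
    rw [h]
    have := norm_cross_le hu1 y hy
    nlinarith [norm_nonneg (cross3 u y)]
  nlinarith [norm_nonneg (cross3 u (cross3 u y))]

lemma key_integral {u : E3} (hu1 : ⟪u, u⟫ = 1) (P : ℝ → ℝ)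
    (hPc : ContinuousOn P (Set.Icc (-1 : ℝ) 1)) (x₀ : E3) (hx : ‖x₀‖ ≠ 1) :
    ∫ y in sphS, P ⟪y, u⟫ * ((‖x₀ - y‖ ^ 3)⁻¹ * ⟪x₀ - y, cross3 u y⟫) ∂μH[2] = 0 := by
  have hnu : ‖u‖ = 1 := by
    have := hu1; rw [real_inner_self_eq_norm_sq] at this
    nlinarith [norm_nonneg u]
  set δ := |‖x₀‖ - 1| with hδdef
  have hδ : 0 < δ := abs_pos.mpr (sub_ne_zero.mpr hx)
  have hlow : ∀ (t : ℝ) (y : E3), ‖y‖ = 1 → δ ≤ ‖x₀ - Rot u t y‖ := by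
    intro t y hy
    have h1 : ‖Rot u t y‖ = 1 := by rw [rot_norm' hu1, hy]
    calc δ = |‖x₀‖ - ‖Rot u t y‖| := by rw [h1]
      _ ≤ ‖x₀ - Rot u t y‖ := abs_norm_sub_norm_le _ _
  have hmem : ∀ y ∈ sphS, ‖y‖ = 1 := fun y hy => by
    simpa [sphS] using mem_sphere_zero_iff_norm.mp hy
  have hIcc : ∀ y : E3, ‖y‖ = 1 → ⟪y, u⟫ ∈ Set.Icc (-1 : ℝ) 1 := by
    intro y hy
    have := abs_real_inner_le_norm y u
    rw [hy, hnu] at this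
    simp only [Set.mem_Icc]
    rw [abs_le] at this; simpa using this
  obtain ⟨M, hM⟩ := isCompact_Icc.exists_bound_of_continuousOn hPc
  have hM0 : 0 ≤ M := le_trans (norm_nonneg _) (hM 0 (by norm_num))
  set F : ℝ → E3 → ℝ := fun t y => P ⟪y, u⟫ * ‖x₀ - Rot u t y‖⁻¹ with hFdef
  set F' : ℝ → E3 → ℝ := fun t y => P ⟪y, u⟫ * ((‖x₀ - Rot u t y‖ ^ 3)⁻¹ *
    ⟪x₀ - Rot u t y, Real.cos t • cross3 u y + Real.sin t • cross3 u (cross3 u y)⟫) with hF'def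
  -- pointwise derivative
  have hFD : ∀ (t : ℝ) (y : E3), ‖y‖ = 1 → HasDerivAt (F · y) (F' t y) t := by
    intro t y hy
    have hn : ∀ s : ℝ, ‖x₀ - Rot u s y‖ ≠ 0 := fun s =>
      ne_of_gt (lt_of_lt_of_le hδ (hlow s y hy))
    set a := cross3 u y with hadef
    set b := cross3 u a with hbdef
    have h1 : HasDerivAt (fun s => Real.sin s • a) (Real.cos t • a) t :=
      (Real.hasDerivAt_sin t).smul_const a
    have h2 : HasDerivAt (fun s => (1 - Real.cos s) • b) (Real.sin t • b) t := by
      have h := ((Real.hasDerivAt_cos t).const_sub 1).smul_const b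
      simpa using h
    have hR : HasDerivAt (fun s => Rot u s y) (Real.cos t • a + Real.sin t • b) t := by
      have h3 := (h1.add h2).const_add y
      have h4 : (fun s => Rot u s y)
          = fun s => y + (Real.sin s • a + (1 - Real.cos s) • b) := by
        funext s; rw [Rot, add_assoc]
      rw [h4]; exact h3
    have hq : HasDerivAt (fun s => x₀ - Rot u s y)
        (-(Real.cos t • a + Real.sin t • b)) t := hR.const_sub x₀
    have hin := HasDerivAt.inner ℝ hq hq
    have hpos : (0 : ℝ) < ⟪x₀ - Rot u t y, x₀ - Rot u t y⟫ := by
      rw [real_inner_self_eq_norm_sq]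
      have := hn t
      positivity
    have hsq := (Real.hasDerivAt_sqrt (ne_of_gt hpos)).comp t hin
    have hsqrtval : ∀ s : ℝ, Real.sqrt ⟪x₀ - Rot u s y, x₀ - Rot u s y⟫
        = ‖x₀ - Rot u s y‖ := by
      intro s
      rw [real_inner_self_eq_norm_sq]
      exact Real.sqrt_sq (norm_nonneg _)
    have hinv := hsq.inv (by rw [Function.comp, hsqrtval]; exact hn t)
    have hfin := hinv.const_mul (P ⟪y, u⟫)
    have hfeq : (F · y) = fun s =>
        P ⟪y, u⟫ * ((Real.sqrt ∘ fun s => ⟪x₀ - Rot u s y, x₀ - Rot u s y⟫) s)⁻¹ := by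
      funext s
      simp only [hFdef, Function.comp, hsqrtval]
    rw [hfeq]
    refine hfin.congr_deriv ?_
    rw [hF'def]
    simp only [Function.comp, hsqrtval]
    set n := ‖x₀ - Rot u t y‖ with hndef
    have hne : n ≠ 0 := hn t
    simp only [inner_neg_left, inner_neg_right]
    have h5 : ⟪Real.cos t • a + Real.sin t • b, x₀ - Rot u t y⟫
        = ⟪x₀ - Rot u t y, Real.cos t • a + Real.sin t • b⟫ := by rw [real_inner_comm]
    rw [h5]
    field_simp
    ring
  -- continuity facts
  have hPcont : ContinuousOn (fun y : E3 => P ⟪y, u⟫) sphS := by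
    apply hPc.comp ((continuous_id.inner continuous_const).continuousOn)
    intro y hy
    exact hIcc y (hmem y hy)
  have hnecont : ∀ t : ℝ, ContinuousOn (fun y : E3 => ‖x₀ - Rot u t y‖⁻¹) sphS := by
    intro t
    apply ContinuousOn.inv₀
    · exact ((continuous_const.sub (rotEquiv u hu1 t).continuous).norm).continuousOn
    · intro y hy
      exact ne_of_gt (lt_of_lt_of_le hδ (hlow t y (hmem y hy)))
  have hFcont : ∀ t : ℝ, ContinuousOn (F t) sphS := fun t =>
    hPcont.mul (hnecont t)
  have hF'cont : ContinuousOn (F' 0) sphS := by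
    apply hPcont.mul
    apply ContinuousOn.mul
    · apply ContinuousOn.inv₀
      · exact (((continuous_const.sub (rotEquiv u hu1 0).continuous).norm).pow 3).continuousOn
      · intro y hy
        have := lt_of_lt_of_le hδ (hlow 0 y (hmem y hy))
        positivity
    · apply Continuous.continuousOn
      apply Continuous.inner
      · exact continuous_const.sub (rotEquiv u hu1 0).continuous
      · apply Continuous.add
        · exact (cross3_cont u).const_smul (Real.cos 0)
        · exact ((cross3_cont u).comp (cross3_cont u)).const_smul (Real.sin 0)
  -- measure
  have hF_meas : ∀ᶠ t in nhds (0:ℝ), AEStronglyMeasurable (F t)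
      ((μH[2] : Measure E3).restrict sphS) :=
    Filter.Eventually.of_forall fun t => (hFcont t).aestronglyMeasurable sphS_measurable
  have hF_int : Integrable (F 0) ((μH[2] : Measure E3).restrict sphS) :=
    integrable_sph (hFcont 0)
  have hF'_meas : AEStronglyMeasurable (F' 0) ((μH[2] : Measure E3).restrict sphS) :=
    hF'cont.aestronglyMeasurable sphS_measurable
  -- bound
  have h_bound : ∀ᵐ y ∂((μH[2] : Measure E3).restrict sphS),
      ∀ t ∈ Metric.ball (0:ℝ) 1, ‖F' t y‖ ≤ M * (2 / δ ^ 2) := by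
    refine (ae_restrict_mem sphS_measurable).mono fun y hy => ?_
    intro t _
    have hy1 := hmem y hy
    have hn : δ ≤ ‖x₀ - Rot u t y‖ := hlow t y hy1
    set n := ‖x₀ - Rot u t y‖ with hndef
    have hn0 : 0 < n := lt_of_lt_of_le hδ hn
    have hA : ‖Real.cos t • cross3 u y + Real.sin t • cross3 u (cross3 u y)‖ ≤ 2 := by
      calc ‖Real.cos t • cross3 u y + Real.sin t • cross3 u (cross3 u y)‖
          ≤ ‖Real.cos t • cross3 u y‖ + ‖Real.sin t • cross3 u (cross3 u y)‖ := norm_add_le _ _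
        _ ≤ 1 * 1 + 1 * 1 := by
            rw [norm_smul, norm_smul]
            apply add_le_add
            · exact mul_le_mul (by simpa using Real.abs_cos_le_one t)
                (norm_cross_le hu1 y hy1) (norm_nonneg _) zero_le_one
            · exact mul_le_mul (by simpa using Real.abs_sin_le_one t)
                (norm_crosscross_le hu1 y hy1) (norm_nonneg _) zero_le_one
        _ = 2 := by norm_num
    have hinner : |⟪x₀ - Rot u t y, Real.cos t • cross3 u y
        + Real.sin t • cross3 u (cross3 u y)⟫| ≤ n * 2 :=
      le_trans (abs_real_inner_le_norm _ _) (by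
        apply mul_le_mul_of_nonneg_left hA (norm_nonneg _))
    have hPb : |P ⟪y, u⟫| ≤ M := hM _ (hIcc y hy1)
    have step : ‖F' t y‖ ≤ M * ((n ^ 3)⁻¹ * (n * 2)) := by
      rw [hF'def]
      simp only [← hndef]
      rw [Real.norm_eq_abs, abs_mul, abs_mul]
      have h1 : |(n ^ 3)⁻¹| = (n ^ 3)⁻¹ := abs_of_pos (by positivity)
      rw [h1]
      apply mul_le_mul hPb _ (by positivity) hM0
      exact mul_le_mul_of_nonneg_left hinner (by positivity)
    refine le_trans step ?_
    have he : (n ^ 3)⁻¹ * (n * 2) = 2 / n ^ 2 := by field_simp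
    rw [he]
    apply mul_le_mul_of_nonneg_left _ hM0
    apply div_le_div_of_nonneg_left (by norm_num) (by positivity)
    nlinarith
  have h_diff : ∀ᵐ y ∂((μH[2] : Measure E3).restrict sphS),
      ∀ t ∈ Metric.ball (0:ℝ) 1, HasDerivAt (F · y) (F' t y) t := by
    refine (ae_restrict_mem sphS_measurable).mono fun y hy t _ => hFD t y (hmem y hy)
  obtain ⟨-, hder⟩ := hasDerivAt_integral_of_dominated_loc_of_deriv_le
    (Metric.ball_mem_nhds 0 one_pos) hF_meas hF_int hF'_meas h_bound
    (integrable_const _) h_diff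
  -- the integral is constant in t
  have hconst : (fun t => ∫ y in sphS, F t y ∂μH[2])
      = fun _ => ∫ y in sphS, P ⟪y, u⟫ * ‖x₀ - y‖⁻¹ ∂μH[2] := by
    funext t
    have h := rot_setIntegral hu1 t (fun y => P ⟪y, u⟫ * ‖x₀ - y‖⁻¹)
    rw [← h]
    simp_rw [rot_inner_u hu1]
    rfl
  rw [show (fun t => ∫ y, F t y ∂((μH[2] : Measure E3).restrict sphS))
      = (fun t => ∫ y in sphS, F t y ∂μH[2]) from rfl, hconst] at hder
  have hzero := hder.unique (hasDerivAt_const 0 _)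
  have hfinal : ∫ y in sphS, F' 0 y ∂μH[2] = 0 := hzero
  rw [← hfinal]
  apply setIntegral_congr_fun sphS_measurable
  intro y _
  rw [hF'def]
  simp [rot_zero]

lemma cross3_zero_right (a : E3) : cross3 a 0 = 0 := by
  apply E3ext <;> simp [PiLp.zero_apply] <;> ring




/-- **Non-uniqueness of dipole directions.** For two linearly independent directions
`d, d̄` on the sphere and any `C¹` profile `P : [-1,1] → ℝ`, the susceptibilities
`Q(x) = P(x·u)(x·d̄)` and `Q̄(x) = P(x·u)(x·d)`, with `u = (d × d̄)/|d × d̄|`, produce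
identical magnetic potentials everywhere off the unit sphere. -/
theorem dipole_direction_nonuniqueness
    (d dbar : E3) (hd : d ∈ sphS) (hdbar : dbar ∈ sphS)
    (hind : LinearIndependent ℝ ![d, dbar])
    (u : E3) (hu : u = ‖cross3 d dbar‖⁻¹ • cross3 d dbar)
    (P : ℝ → ℝ) (hP : ContDiffOn ℝ 1 P (Set.Icc (-1 : ℝ) 1))
    (Q Qbar : E3 → ℝ)
    (hQ : ∀ x : E3, Q x = P ⟪x, u⟫ * ⟪x, dbar⟫)
    (hQbar : ∀ x : E3, Qbar x = P ⟪x, u⟫ * ⟪x, d⟫) :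
    ∀ x₀ : E3, ‖x₀‖ ≠ 1 → V (mQd Q d) x₀ = V (mQd Qbar dbar) x₀ := by
  have hdn : ‖d‖ = 1 := by simpa [sphS] using mem_sphere_zero_iff_norm.mp hd
  have hdd : ⟪d, d⟫ = 1 := by rw [real_inner_self_eq_norm_sq, hdn]; norm_num
  -- the cross product is nonzero
  have hc0 : cross3 d dbar ≠ 0 := by
    intro h0
    have ht := triple d d dbar
    rw [h0, cross3_zero_right, hdd, one_smul] at ht
    have hrel : dbar = ⟪d, dbar⟫ • d := by
      have := sub_eq_zero.mp ht.symm
      linear_combination (norm := module) - this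
    obtain ⟨hb0, hball⟩ := linearIndependent_fin2.mp hind
    simp only [Matrix.cons_val_one, Matrix.head_cons, Matrix.cons_val_zero] at hb0 hball
    set q := ⟪d, dbar⟫ with hqdef
    by_cases hq : q = 0
    · rw [hq, zero_smul] at hrel; exact hb0 hrel
    · apply hball q⁻¹
      rw [hrel, smul_smul, inv_mul_cancel₀ hq, one_smul]
  set lam := ‖cross3 d dbar‖ with hlamdef
  have hlam : 0 < lam := norm_pos_iff.mpr hc0
  have hu1 : ⟪u, u⟫ = 1 := by
    rw [hu, real_inner_smul_left, real_inner_smul_right, real_inner_self_eq_norm_sq]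
    field_simp
    rw [← hlamdef]
  have hceq : cross3 d dbar = lam • u := by
    rw [hu, smul_smul, mul_inv_cancel₀ hlam.ne', one_smul]
  intro x₀ hx
  have hkey := key_integral hu1 P hP.continuousOn x₀ hx
  -- pointwise identity
  have hpt : ∀ y : E3,
      ⟪mQd Q d y, (‖x₀ - y‖ ^ 3)⁻¹ • (x₀ - y)⟫
        - ⟪mQd Qbar dbar y, (‖x₀ - y‖ ^ 3)⁻¹ • (x₀ - y)⟫
      = lam * (P ⟪y, u⟫ * ((‖x₀ - y‖ ^ 3)⁻¹ * ⟪x₀ - y, cross3 u y⟫)) := by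
    intro y
    rw [← inner_sub_left]
    have ht := triple y d dbar
    have hyc : cross3 y (cross3 d dbar) = -(lam • cross3 u y) := by
      rw [hceq, cross3_smul_right, cross3_anti y u, smul_neg]
    have e : ⟪y, dbar⟫ • d - ⟪y, d⟫ • dbar = -(lam • cross3 u y) := by rw [← ht, hyc]
    have e2 : cross3 u y = (-(lam⁻¹)) • (⟪y, dbar⟫ • d - ⟪y, d⟫ • dbar) := by
      rw [e, smul_neg, neg_smul, neg_neg, smul_smul, inv_mul_cancel₀ hlam.ne', one_smul]
    have hm : mQd Q d y - mQd Qbar dbar y = (lam * P ⟪y, u⟫) • cross3 u y := by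
      rw [mQd, mQd, hQ y, hQbar y, e2]
      match_scalars <;> field_simp <;> ring
    rw [hm, real_inner_smul_left, real_inner_smul_right]
    rw [real_inner_comm (cross3 u y) (x₀ - y)]
    ring
  -- integrability
  have hKcont : ContinuousOn (fun y : E3 => (‖x₀ - y‖ ^ 3)⁻¹ • (x₀ - y)) sphS := by
    apply ContinuousOn.smul (f := fun y : E3 => (‖x₀ - y‖ ^ 3)⁻¹) (g := fun y : E3 => x₀ - y)
    · apply ContinuousOn.inv₀
      · exact (((continuous_const.sub continuous_id).norm).pow 3).continuousOn
      · intro y hy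
        have hy1 : ‖y‖ = 1 := by simpa [sphS] using mem_sphere_zero_iff_norm.mp hy
        have : ‖x₀ - y‖ ≠ 0 := by
          rw [norm_ne_zero_iff, sub_ne_zero]
          intro h; rw [h] at hx; exact hx hy1
        positivity
    · exact (continuous_const.sub continuous_id).continuousOn
  have hIcc : ∀ y ∈ sphS, ⟪y, u⟫ ∈ Set.Icc (-1 : ℝ) 1 := by
    intro y hy
    have hy1 : ‖y‖ = 1 := by simpa [sphS] using mem_sphere_zero_iff_norm.mp hy
    have hnu : ‖u‖ = 1 := by
      have := hu1; rw [real_inner_self_eq_norm_sq] at this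
      nlinarith [norm_nonneg u]
    have := abs_real_inner_le_norm y u
    rw [hy1, hnu] at this
    simp only [Set.mem_Icc]
    rw [abs_le] at this; simpa using this
  have hPcont : ContinuousOn (fun y : E3 => P ⟪y, u⟫) sphS :=
    hP.continuousOn.comp ((continuous_id.inner continuous_const).continuousOn) hIcc
  have hmcont : ∀ (R : E3 → ℝ) (e : E3), ContinuousOn R sphS →
      ContinuousOn (fun y => mQd R e y) sphS := by
    intro R e hR
    apply hR.smul (g := fun y => (3 * ⟪y, e⟫) • y - e)
    apply Continuous.continuousOn
    fun_prop
  have hQcont : ContinuousOn Q sphS := by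
    have : Q = fun x => P ⟪x, u⟫ * ⟪x, dbar⟫ := funext hQ
    rw [this]
    exact hPcont.mul (continuous_id.inner continuous_const).continuousOn
  have hQbarcont : ContinuousOn Qbar sphS := by
    have : Qbar = fun x => P ⟪x, u⟫ * ⟪x, d⟫ := funext hQbar
    rw [this]
    exact hPcont.mul (continuous_id.inner continuous_const).continuousOn
  have hint1 : Integrable (fun y => ⟪mQd Q d y, (‖x₀ - y‖ ^ 3)⁻¹ • (x₀ - y)⟫)
      ((μH[2] : Measure E3).restrict sphS) :=
    integrable_sph ((hmcont Q d hQcont).inner hKcont)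
  have hint2 : Integrable (fun y => ⟪mQd Qbar dbar y, (‖x₀ - y‖ ^ 3)⁻¹ • (x₀ - y)⟫)
      ((μH[2] : Measure E3).restrict sphS) :=
    integrable_sph ((hmcont Qbar dbar hQbarcont).inner hKcont)
  -- conclude
  have hsub := integral_sub hint1 hint2
  have hfe : (fun y => ⟪mQd Q d y, (‖x₀ - y‖ ^ 3)⁻¹ • (x₀ - y)⟫
      - ⟪mQd Qbar dbar y, (‖x₀ - y‖ ^ 3)⁻¹ • (x₀ - y)⟫)
      = fun y => lam * (P ⟪y, u⟫ * ((‖x₀ - y‖ ^ 3)⁻¹ * ⟪x₀ - y, cross3 u y⟫)) :=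
    funext hpt
  rw [hfe] at hsub
  rw [integral_const_mul, hkey, mul_zero] at hsub
  have : (∫ y in sphS, ⟪mQd Q d y, (‖x₀ - y‖ ^ 3)⁻¹ • (x₀ - y)⟫ ∂μH[2])
      = ∫ y in sphS, ⟪mQd Qbar dbar y, (‖x₀ - y‖ ^ 3)⁻¹ • (x₀ - y)⟫ ∂μH[2] := by
    have := hsub.symm
    linarith [this]
  rw [V, V, this]
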